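/- Let A = (a_{ij}), i ∈ I, j ∈ J, be a matrix whose entries take at most k distinct values, each of which is a rational of the form m/k with m ∈ {0, 1, …, k} (i.e., 0 ≤ a_{ij} ≤ 1 and k·a_{ij} ∈ ℤ). If rank A ≤ d + 2, then rank_psd A ≤ C(d + k + 2, k). -/

import Mathlib

noncomputable section Stmt16Aux

def stmt16symOf {n s : ℕ} (g : Fin s → Fin n) : Sym (Fin n) s :=
  ⟨Finset.univ.val.map g, by simp⟩

def stmt16cnt (n s : ℕ) (m : Sym (Fin n) s) : ℕ :=
  (Finset.univ.filter fun g : Fin s → Fin n => stmt16symOf g = m).card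

lemma stmt16prodOf {n s : ℕ} (g : Fin s → Fin n) (u : Fin n → ℝ) :
    ((stmt16symOf g : Multiset (Fin n)).map u).prod = ∏ i, u (g i) := by
  show ((Finset.univ.val.map g).map u).prod = _
  rw [Multiset.map_map, Finset.prod_map_val]; rfl

lemma stmt16lem1 (n s : ℕ) (u v : Fin n → ℝ) :
    (∑ t, u t * v t) ^ s =
    ∑ m : Sym (Fin n) s, (stmt16cnt n s m : ℝ) *
      (((m : Multiset (Fin n)).map u).prod * ((m : Multiset (Fin n)).map v).prod) := by
  rw [Fintype.sum_pow]
  have h1 : ∀ g : Fin s → Fin n, ∏ i, (u (g i) * v (g i)) =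
      ((stmt16symOf g : Multiset (Fin n)).map u).prod *
        ((stmt16symOf g : Multiset (Fin n)).map v).prod := by
    intro g
    rw [stmt16prodOf, stmt16prodOf, Finset.prod_mul_distrib]
  calc ∑ g : Fin s → Fin n, ∏ i, (u (g i) * v (g i))
      = ∑ g : Fin s → Fin n,
        (((stmt16symOf g : Multiset (Fin n)).map u).prod *
          ((stmt16symOf g : Multiset (Fin n)).map v).prod) :=
        Finset.sum_congr rfl fun g _ => h1 g
    _ = ∑ m : Sym (Fin n) s,
        ∑ g ∈ Finset.univ.filter (fun g : Fin s → Fin n => stmt16symOf g = m),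
        (((m : Multiset (Fin n)).map u).prod * ((m : Multiset (Fin n)).map v).prod) :=
        (Finset.sum_fiberwise_of_maps_to' (s := (Finset.univ : Finset (Fin s → Fin n)))
          (t := (Finset.univ : Finset (Sym (Fin n) s))) (g := stmt16symOf)
          (fun g _ => Finset.mem_univ (stmt16symOf g))
          (fun m => ((m : Multiset (Fin n)).map u).prod *
            ((m : Multiset (Fin n)).map v).prod)).symm
    _ = _ := by
        refine Finset.sum_congr rfl fun m _ => ?_
        rw [Finset.sum_const, nsmul_eq_mul]
        rfl

lemma stmt16lem2 (d k : ℕ) :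
    Fintype.card (Σ s : Fin (k+1), Sym (Fin (d+2)) (s : ℕ)) = (d+k+2).choose k := by
  rw [Fintype.card_sigma]
  have h1 : ∀ s : ℕ, Fintype.card (Sym (Fin (d+2)) s) = (s + (d+1)).choose (d+1) := by
    intro s
    rw [Sym.card_sym_eq_choose, Fintype.card_fin, ← Nat.choose_symm (by omega)]
    congr 1 <;> omega
  calc ∑ s : Fin (k+1), Fintype.card (Sym (Fin (d+2)) (s : ℕ))
      = ∑ s : Fin (k+1), ((s : ℕ) + (d+1)).choose (d+1) :=
        Finset.sum_congr rfl fun s _ => h1 s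
    _ = ∑ s ∈ Finset.range (k+1), (s + (d+1)).choose (d+1) :=
        Fin.sum_univ_eq_sum_range (fun s => (s + (d+1)).choose (d+1)) (k+1)
    _ = (k + (d+1) + 1).choose (d+2) := Nat.sum_range_add_choose k (d+1)
    _ = (d+k+2).choose k := by
        rw [← Nat.choose_symm (by omega)]
        congr 1 <;> omega

lemma stmt16lem3 (k : ℕ) (hk : 0 < k) :
    ∃ c : ℕ → ℝ, ∀ m : ℕ, m ≤ k →
      ∑ s ∈ Finset.range (k+1), c s * ((m : ℝ)/k)^s = Real.sqrt ((m : ℝ)/k) := by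
  have hinj : Set.InjOn (fun m : ℕ => (m : ℝ)/k) (Finset.range (k+1)) := by
    intro x _ y _ h
    have hk' : (0:ℝ) < k := by exact_mod_cast hk
    field_simp at h
    exact_mod_cast h
  set p := Lagrange.interpolate (Finset.range (k+1)) (fun m : ℕ => (m : ℝ)/k)
    (fun m : ℕ => Real.sqrt ((m : ℝ)/k)) with hp
  refine ⟨fun s => p.coeff s, fun m hm => ?_⟩
  have hdeg : p.degree < (k+1 : ℕ) := by
    simpa only [Finset.card_range] using Lagrange.degree_interpolate_lt _ hinj
  have hnd : p.natDegree < k+1 := by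
    by_cases hp0 : p = 0
    · simp [hp0]
    · exact (Polynomial.natDegree_lt_iff_degree_lt hp0).mpr hdeg
  have heval : p.eval ((m : ℝ)/k) = Real.sqrt ((m : ℝ)/k) :=
    Lagrange.eval_interpolate_at_node _ hinj (Finset.mem_range.mpr (by omega))
  rw [← heval, Polynomial.eval_eq_sum_range' hnd]

lemma stmt16psd_outer {N : ℕ} (w : Fin N → ℝ) :
    (Matrix.of fun p q => w p * w q).PosSemidef := by
  refine Matrix.posSemidef_iff_dotProduct_mulVec.mpr ⟨?_, ?_⟩
  · ext p q
    simp [Matrix.conjTranspose_apply, mul_comm]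
  · intro x
    have h : dotProduct (star x) ((Matrix.of fun p q => w p * w q).mulVec x)
        = (∑ p, w p * x p) * (∑ p, w p * x p) := by
      simp only [dotProduct, Matrix.mulVec, Matrix.of_apply, Pi.star_apply, star_trivial]
      rw [Finset.sum_mul_sum]
      exact Finset.sum_congr rfl fun p _ => by
        rw [Finset.mul_sum]
        exact Finset.sum_congr rfl fun q _ => by ring
    rw [h]
    exact mul_self_nonneg _

end Stmt16Aux

theorem stmt16 {I J : Type*} (d k : ℕ) (hk : 0 < k) (a : I → J → ℝ)
    (hval : ∀ i j, ∃ m : ℕ, m ≤ k ∧ a i j = (m : ℝ) / k)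
    (u : I → Fin (d + 2) → ℝ) (v : J → Fin (d + 2) → ℝ)
    (ha : ∀ i j, a i j = ∑ t, u i t * v j t) :
    ∃ (U : I → Matrix (Fin ((d + k + 2).choose k)) (Fin ((d + k + 2).choose k)) ℝ)
      (V : J → Matrix (Fin ((d + k + 2).choose k)) (Fin ((d + k + 2).choose k)) ℝ),
      (∀ i, (U i).PosSemidef) ∧ (∀ j, (V j).PosSemidef) ∧
      ∀ i j, a i j = ∑ p, ∑ q, U i p q * V j p q := by
  classical
  obtain ⟨c, hc⟩ := stmt16lem3 k hk
  let ι := Σ s : Fin (k+1), Sym (Fin (d+2)) (s : ℕ)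
  have hcard : Fintype.card ι = (d+k+2).choose k := stmt16lem2 d k
  let e : ι ≃ Fin ((d+k+2).choose k) := Fintype.equivFinOfCardEq hcard
  let φ : I → ι → ℝ := fun i x =>
    c x.1 * (stmt16cnt (d+2) x.1 x.2 : ℝ) * ((x.2 : Multiset (Fin (d+2))).map (u i)).prod
  let ψ : J → ι → ℝ := fun j x => ((x.2 : Multiset (Fin (d+2))).map (v j)).prod
  have key : ∀ i j, ∑ x : ι, φ i x * ψ j x = Real.sqrt (a i j) := by
    intro i j
    obtain ⟨m, hm, hmv⟩ := hval i j
    calc ∑ x : ι, φ i x * ψ j x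
        = ∑ s : Fin (k+1), ∑ m' : Sym (Fin (d+2)) (s : ℕ), φ i ⟨s, m'⟩ * ψ j ⟨s, m'⟩ := by
          rw [← Finset.univ_sigma_univ, Finset.sum_sigma]
      _ = ∑ s : Fin (k+1), c s * (∑ t, u i t * v j t) ^ (s : ℕ) := by
          refine Finset.sum_congr rfl fun s _ => ?_
          rw [stmt16lem1, Finset.mul_sum]
          exact Finset.sum_congr rfl fun m' _ => by simp only [φ, ψ]; ring
      _ = ∑ s : Fin (k+1), c s * (a i j) ^ (s : ℕ) := by
          refine Finset.sum_congr rfl fun s _ => ?_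
          rw [← ha i j]
      _ = ∑ s ∈ Finset.range (k+1), c s * (a i j) ^ s :=
          Fin.sum_univ_eq_sum_range (fun s => c s * (a i j) ^ s) (k+1)
      _ = Real.sqrt (a i j) := by rw [hmv]; exact hc m hm
  let w : I → Fin ((d+k+2).choose k) → ℝ := fun i => φ i ∘ e.symm
  let z : J → Fin ((d+k+2).choose k) → ℝ := fun j => ψ j ∘ e.symm
  have hw : ∀ i j, ∑ p, w i p * z j p = Real.sqrt (a i j) := by
    intro i j
    rw [← key i j]
    exact Equiv.sum_comp e.symm (fun x => φ i x * ψ j x)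
  refine ⟨fun i => Matrix.of fun p q => w i p * w i q,
    fun j => Matrix.of fun p q => z j p * z j q,
    fun i => stmt16psd_outer _, fun j => stmt16psd_outer _, ?_⟩
  intro i j
  have hnn : 0 ≤ a i j := by
    obtain ⟨m, hm, hmv⟩ := hval i j
    rw [hmv]; positivity
  have : ∑ p, ∑ q, (w i p * w i q) * (z j p * z j q)
      = (∑ p, w i p * z j p) * (∑ q, w i q * z j q) := by
    rw [Finset.sum_mul_sum]
    exact Finset.sum_congr rfl fun p _ =>
      Finset.sum_congr rfl fun q _ => by ring
  calc a i j = Real.sqrt (a i j) * Real.sqrt (a i j) := (Real.mul_self_sqrt hnn).symm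
    _ = (∑ p, w i p * z j p) * (∑ q, w i q * z j q) := by rw [hw]
    _ = ∑ p, ∑ q, (w i p * w i q) * (z j p * z j q) := this.symm
    _ = _ := rfl
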